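/- Let X_A, Z_A be Hermitian matrices on ℂ^{d_A} with pairwise distinct nonzero eigenvalues α_i (resp. γ_i) and orthonormal eigenbases {x_i^A} (resp. {z_i^A}), and let X_B, Z_B be Hermitian matrices on ℂ^{d_B} with pairwise distinct nonzero eigenvalues β_j (resp. δ_j) and orthonormal eigenbases {x_j^B} (resp. {z_j^B}). Then for all density matrices ρ_A on ℂ^{d_A} and ρ_B on ℂ^{d_B}, the direct sum of the grouped joint distribution of ρ_A ⊗ ρ_B in {x_i^A ⊗ x_j^B} (grouped by values of α_i β_j) and the grouped joint distribution of ρ_A ⊗ ρ_B in {z_i^A ⊗ z_j^B} (grouped by values of γ_i δ_j) is majorized by p(x^A|ρ_A) ⊕ p(z^A|ρ_A). -/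

import Mathlib

open Matrix
open scoped Kronecker ComplexOrder

noncomputable section

/-- Sum of the `k` largest entries of `v` (zero-padding implicit for nonneg vectors):
the maximum of `∑ i ∈ s, v i` over subsets `s` of cardinality at most `k`. -/
def topSum {ι : Type*} [Fintype ι] (v : ι → ℝ) (k : ℕ) : ℝ :=
  (Finset.univ.powerset.filter fun s => s.card ≤ k).sup' ⟨∅, by simp⟩ fun s => ∑ i ∈ s, v i

/-- `v ≺ w` (majorization, with implicit zero padding): every partial sum of the `k` largest
entries of `v` is at most that of `w`, and the total sums are equal. -/
def Majorizes {ι κ : Type*} [Fintype ι] [Fintype κ] (v : ι → ℝ) (w : κ → ℝ) : Prop :=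
  (∀ k : ℕ, topSum v k ≤ topSum w k) ∧ (∑ i, v i = ∑ j, w j)

/-- The operator norm (largest singular value) of a complex matrix. -/
def opNorm {m n : Type*} [Fintype m] [Fintype n] [DecidableEq n] (M : Matrix m n ℂ) : ℝ :=
  ‖LinearMap.toContinuousLinearMap (Matrix.toEuclideanLin M)‖

/-- `sCoef U k = s_k`: the maximum operator norm over all submatrices of `U` of class `k`,
i.e. obtained by selecting nonempty row/column sets `R`, `C` with `|R| + |C| = k + 1`. -/
def sCoef {d : ℕ} (U : Matrix (Fin d) (Fin d) ℂ) (k : ℕ) : ℝ :=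
  sSup { r : ℝ | ∃ R C : Finset (Fin d), R.Nonempty ∧ C.Nonempty ∧ R.card + C.card = k + 1 ∧
    r = opNorm (U.submatrix (fun i : {i // i ∈ R} => (i : Fin d))
                            (fun j : {j // j ∈ C} => (j : Fin d))) }

/-- The bound vector `ω^{X⊕Z} = (1, s_1, s_2 - s_1, …, s_d - s_{d-1}, 0, …, 0) ∈ ℝ^{2d}`.
(Note `sCoef U 0 = sSup ∅ = 0`, so the entry at index `1` is `s_1`.) -/
def omegaDS {d : ℕ} (U : Matrix (Fin d) (Fin d) ℂ) : Fin (2 * d) → ℝ := fun i =>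
  if (i : ℕ) = 0 then 1
  else if (i : ℕ) ≤ d then sCoef U (i : ℕ) - sCoef U ((i : ℕ) - 1)
  else 0

/-- A density matrix: positive semidefinite with unit trace. -/
def IsDensityMatrix {n : Type*} [Fintype n] (ρ : Matrix n n ℂ) : Prop :=
  ρ.PosSemidef ∧ ρ.trace = 1

/-- A family of vectors forming an orthonormal basis of `ℂ^d` (w.r.t. `⟨u, v⟩ = star u ⬝ᵥ v`). -/
def OrthonormalBasisVecs {d : ℕ} (x : Fin d → Fin d → ℂ) : Prop :=
  ∀ i j, star (x i) ⬝ᵥ x j = if i = j then 1 else 0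

/-- Measurement distribution of a density matrix `ρ` in the basis `x`: `p i = ⟨x i, ρ (x i)⟩`. -/
def measDist {d : ℕ} (x : Fin d → Fin d → ℂ) (ρ : Matrix (Fin d) (Fin d) ℂ) : Fin d → ℝ :=
  fun i => (star (x i) ⬝ᵥ (ρ *ᵥ x i)).re

/-- The tensor product of vectors. -/
def tensorVec {dA dB : ℕ} (u : Fin dA → ℂ) (v : Fin dB → ℂ) : Fin dA × Fin dB → ℂ :=
  fun ab => u ab.1 * v ab.2

/-- Joint measurement distribution of a bipartite density matrix `ρ` in the product basis
`{xA i ⊗ xB j}`: `p (i,j) = ⟨xA i ⊗ xB j, ρ (xA i ⊗ xB j)⟩`. -/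
def jointDist {dA dB : ℕ} (xA : Fin dA → Fin dA → ℂ) (xB : Fin dB → Fin dB → ℂ)
    (ρ : Matrix (Fin dA × Fin dB) (Fin dA × Fin dB) ℂ) : Fin dA × Fin dB → ℝ :=
  fun ij => (star (tensorVec (xA ij.1) (xB ij.2)) ⬝ᵥ (ρ *ᵥ tensorVec (xA ij.1) (xB ij.2))).re

open scoped Classical in
/-- The finite set of distinct values of the products `α i * β j`. -/
def valueSet {dA dB : ℕ} (α : Fin dA → ℝ) (β : Fin dB → ℝ) : Finset ℝ :=
  Finset.image (fun ij : Fin dA × Fin dB => α ij.1 * β ij.2) Finset.univ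

open scoped Classical in
/-- The grouped distribution of a joint distribution `p`, indexed by the distinct values `l`
of the products `α i * β j`, with entries `∑_{(i,j) : α i * β j = l} p (i,j)`. -/
def groupedDist {dA dB : ℕ} (α : Fin dA → ℝ) (β : Fin dB → ℝ)
    (p : Fin dA × Fin dB → ℝ) : valueSet α β → ℝ :=
  fun l => ∑ ij ∈ Finset.univ.filter (fun ij : Fin dA × Fin dB => α ij.1 * β ij.2 = (l : ℝ)), p ij

/-- Separability: `ρ` is a finite convex combination of tensor products of density matrices. -/
def IsSeparableState {dA dB : ℕ} (ρ : Matrix (Fin dA × Fin dB) (Fin dA × Fin dB) ℂ) : Prop :=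
  ∃ (K : ℕ) (lam : Fin K → ℝ) (σ : Fin K → Matrix (Fin dA) (Fin dA) ℂ)
    (τ : Fin K → Matrix (Fin dB) (Fin dB) ℂ),
    (∀ k, 0 ≤ lam k) ∧ (∑ k, lam k = 1) ∧
    (∀ k, IsDensityMatrix (σ k)) ∧ (∀ k, IsDensityMatrix (τ k)) ∧
    ρ = ∑ k, (lam k : ℂ) • (σ k ⊗ₖ τ k)


lemma sum_le_topSum {ι : Type*} [Fintype ι] (v : ι → ℝ) {s : Finset ι} {k : ℕ}
    (h : s.card ≤ k) : ∑ i ∈ s, v i ≤ topSum v k := by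
  have hm : s ∈ Finset.univ.powerset.filter fun t : Finset ι => t.card ≤ k := by simp [h]
  exact Finset.le_sup' (fun t => ∑ i ∈ t, v i) hm

lemma topSum_le {ι : Type*} [Fintype ι] (v : ι → ℝ) (k : ℕ) {b : ℝ}
    (h : ∀ s : Finset ι, s.card ≤ k → ∑ i ∈ s, v i ≤ b) : topSum v k ≤ b := by
  apply Finset.sup'_le
  intro s hs
  exact h s (by simpa using (Finset.mem_filter.mp hs).2)

lemma exists_topSum {ι : Type*} [Fintype ι] (v : ι → ℝ) (k : ℕ) :
    ∃ s : Finset ι, s.card ≤ k ∧ topSum v k = ∑ i ∈ s, v i ∧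
      ∀ t : Finset ι, t.card ≤ k → ∑ i ∈ t, v i ≤ ∑ i ∈ s, v i := by
  obtain ⟨s, hs, heq⟩ := Finset.exists_mem_eq_sup'
    (⟨∅, by simp⟩ : (Finset.univ.powerset.filter fun s : Finset ι => s.card ≤ k).Nonempty)
    (fun s => ∑ i ∈ s, v i)
  refine ⟨s, by simpa using (Finset.mem_filter.mp hs).2, heq, fun t ht => ?_⟩
  rw [← heq]; exact sum_le_topSum v ht

lemma topSum_mono {ι : Type*} [Fintype ι] (v : ι → ℝ) {k k' : ℕ} (h : k ≤ k') :
    topSum v k ≤ topSum v k' :=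
  topSum_le v k fun _ hs => sum_le_topSum v (hs.trans h)

/-- Key combinatorial lemma: if `0 ≤ c ≤ 1` and `∑ c ≤ k`, then `∑ v*c ≤ topSum v k`. -/
lemma sum_mul_le_topSum {ι : Type*} [Fintype ι] (v c : ι → ℝ) (k : ℕ)
    (hv : ∀ i, 0 ≤ v i) (hc0 : ∀ i, 0 ≤ c i) (hc1 : ∀ i, c i ≤ 1)
    (hck : ∑ i, c i ≤ (k : ℝ)) : ∑ i, v i * c i ≤ topSum v k := by
  classical
  obtain ⟨s, hsk, heq, hmax⟩ := exists_topSum v k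
  rw [heq]
  have hswap : ∀ i ∈ s, ∀ j, j ∉ s → v j ≤ v i := by
    intro i hi j hj
    have hpos : 1 ≤ s.card := Finset.card_pos.mpr ⟨i, hi⟩
    have hcard : (insert j (s.erase i)).card ≤ k := by
      have h1 := Finset.card_insert_le j (s.erase i)
      have h2 : (s.erase i).card = s.card - 1 := Finset.card_erase_of_mem hi
      omega
    have hsum := hmax _ hcard
    rw [Finset.sum_insert (by simp [hj]), Finset.sum_erase_eq_sub hi] at hsum
    linarith
  have hsplit : ∀ f : ι → ℝ,
      ∑ i ∈ Finset.univ \ s, f i + ∑ i ∈ s, f i = ∑ i, f i :=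
    fun f => Finset.sum_sdiff (Finset.subset_univ s)
  rcases lt_or_eq_of_le hsk with hlt | hke
  · -- every element outside s has v = 0
    have hout : ∀ j, j ∉ s → v j = 0 := by
      intro j hj
      have hcard : (insert j s).card ≤ k := by
        have := Finset.card_insert_le j s; omega
      have hsum := hmax _ hcard
      rw [Finset.sum_insert hj] at hsum
      have := hv j; linarith
    have h1 : ∑ i ∈ Finset.univ \ s, v i * c i = 0 :=
      Finset.sum_eq_zero fun j hj => by
        rw [hout j (Finset.mem_sdiff.mp hj).2, zero_mul]
    have h2 : ∑ i ∈ s, v i * c i ≤ ∑ i ∈ s, v i :=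
      Finset.sum_le_sum fun i _ => by nlinarith [hv i, hc0 i, hc1 i]
    rw [← hsplit (fun i => v i * c i)]
    linarith
  · rcases s.eq_empty_or_nonempty with rfl | hs
    · have hk0 : k = 0 := by simpa using hke.symm
      subst hk0
      have hc : ∀ i, c i = 0 := by
        intro i
        have h1 : ∑ i, c i = 0 :=
          le_antisymm (by simpa using hck) (Finset.sum_nonneg fun i _ => hc0 i)
        have := (Finset.sum_eq_zero_iff_of_nonneg (fun i _ => hc0 i)).mp h1
        exact this i (Finset.mem_univ i)
      simp [hc]
    · set m := s.inf' hs v with hm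
      obtain ⟨i0, hi0, hmi0⟩ := Finset.exists_mem_eq_inf' hs v
      have hm0 : 0 ≤ m := by rw [hm, hmi0]; exact hv i0
      have hmle : ∀ i ∈ s, m ≤ v i := fun i hi => Finset.inf'_le v hi
      have hout : ∀ j, j ∉ s → v j ≤ m := by
        intro j hj; rw [hm, hmi0]; exact hswap i0 hi0 j hj
      have key1 : ∑ i ∈ s, v i * c i ≤
          m * ∑ i ∈ s, c i + (∑ i ∈ s, v i - (k : ℝ) * m) := by
        have hle : ∀ i ∈ s, v i * c i ≤ m * c i + (v i - m) := by
          intro i hi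
          nlinarith [hmle i hi, hc1 i, hc0 i]
        calc ∑ i ∈ s, v i * c i ≤ ∑ i ∈ s, (m * c i + (v i - m)) :=
              Finset.sum_le_sum hle
          _ = m * ∑ i ∈ s, c i + (∑ i ∈ s, v i - (k : ℝ) * m) := by
              rw [Finset.sum_add_distrib, Finset.mul_sum, Finset.sum_sub_distrib,
                Finset.sum_const, nsmul_eq_mul, hke]
      have key2 : ∑ i ∈ Finset.univ \ s, v i * c i ≤ m * ∑ i ∈ Finset.univ \ s, c i := by
        rw [Finset.mul_sum]
        exact Finset.sum_le_sum fun j hj =>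
          mul_le_mul_of_nonneg_right (hout j (Finset.mem_sdiff.mp hj).2) (hc0 j)
      have hc_split := hsplit c
      have hvc_split := hsplit (fun i => v i * c i)
      have hmk : m * (∑ i, c i) ≤ m * (k : ℝ) := mul_le_mul_of_nonneg_left hck hm0
      nlinarith [key1, key2]

lemma topSum_add_le_topSum_elim {ι κ : Type*} [Fintype ι] [Fintype κ]
    (v : ι → ℝ) (w : κ → ℝ) (k1 k2 : ℕ) :
    topSum v k1 + topSum w k2 ≤ topSum (Sum.elim v w) (k1 + k2) := by
  obtain ⟨s1, hs1, he1, -⟩ := exists_topSum v k1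
  obtain ⟨s2, hs2, he2, -⟩ := exists_topSum w k2
  rw [he1, he2, ← Finset.sum_sumElim]
  exact sum_le_topSum _ (by rw [Finset.card_disjSum]; omega)

lemma topSum_elim_le_topSum_elim {ι κ ι' κ' : Type*} [Fintype ι] [Fintype κ]
    [Fintype ι'] [Fintype κ']
    {v : ι → ℝ} {w : κ → ℝ} {v' : ι' → ℝ} {w' : κ' → ℝ}
    (hv : ∀ k, topSum v k ≤ topSum v' k) (hw : ∀ k, topSum w k ≤ topSum w' k) (k : ℕ) :
    topSum (Sum.elim v w) k ≤ topSum (Sum.elim v' w') k := by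
  apply topSum_le
  intro s hs
  have hcard : s.toLeft.card + s.toRight.card = s.card := Finset.card_toLeft_add_card_toRight
  have h1 : ∑ x ∈ s, Sum.elim v w x = ∑ i ∈ s.toLeft, v i + ∑ j ∈ s.toRight, w j := by
    conv_lhs => rw [← Finset.toLeft_disjSum_toRight (u := s)]
    rw [Finset.sum_sumElim]
  rw [h1]
  calc ∑ i ∈ s.toLeft, v i + ∑ j ∈ s.toRight, w j
      ≤ topSum v s.toLeft.card + topSum w s.toRight.card :=
        add_le_add (sum_le_topSum v le_rfl) (sum_le_topSum w le_rfl)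
    _ ≤ topSum v' s.toLeft.card + topSum w' s.toRight.card :=
        add_le_add (hv _) (hw _)
    _ ≤ topSum (Sum.elim v' w') (s.toLeft.card + s.toRight.card) :=
        topSum_add_le_topSum_elim _ _ _ _
    _ ≤ topSum (Sum.elim v' w') k := topSum_mono _ (by omega)

lemma measDist_nonneg {d : ℕ} (x : Fin d → Fin d → ℂ) {ρ : Matrix (Fin d) (Fin d) ℂ}
    (hρ : ρ.PosSemidef) (i : Fin d) : 0 ≤ measDist x ρ i := by
  have h := hρ.dotProduct_mulVec_nonneg (x i)
  rw [Complex.le_def] at h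
  simpa [measDist] using h.1

lemma quadForm_im {d : ℕ} {ρ : Matrix (Fin d) (Fin d) ℂ} (hρ : ρ.PosSemidef)
    (u : Fin d → ℂ) : (star u ⬝ᵥ (ρ *ᵥ u)).im = 0 := by
  have h := hρ.dotProduct_mulVec_nonneg u
  rw [Complex.le_def] at h
  simpa using h.2.symm

lemma sum_measDist {d : ℕ} {x : Fin d → Fin d → ℂ} (hx : OrthonormalBasisVecs x)
    {ρ : Matrix (Fin d) (Fin d) ℂ} (hρ : IsDensityMatrix ρ) :
    ∑ i, measDist x ρ i = 1 := by
  set V : Matrix (Fin d) (Fin d) ℂ := Matrix.of fun k i => x i k with hV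
  have h1 : Vᴴ * V = 1 := by
    ext i j
    simpa [Matrix.mul_apply, Matrix.conjTranspose_apply, hV, Matrix.one_apply,
      dotProduct] using hx i j
  have h2 : V * Vᴴ = 1 := mul_eq_one_comm.mp h1
  have h3 : ∑ i, star (x i) ⬝ᵥ (ρ *ᵥ x i) = (Vᴴ * ρ * V).trace := by
    rw [Matrix.trace]
    apply Finset.sum_congr rfl
    intro i _
    simp only [Matrix.diag_apply, Matrix.mul_apply, Matrix.conjTranspose_apply, hV,
      dotProduct, Matrix.mulVec, Matrix.of_apply, Finset.sum_mul, Finset.mul_sum,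
      Pi.star_apply]
    rw [Finset.sum_comm]
    exact Finset.sum_congr rfl fun a _ => Finset.sum_congr rfl fun b _ => by ring
  have h4 : (Vᴴ * ρ * V).trace = 1 := by
    rw [Matrix.trace_mul_comm, ← Matrix.mul_assoc, h2, Matrix.one_mul, hρ.2]
  have : (∑ i, star (x i) ⬝ᵥ (ρ *ᵥ x i)).re = (1 : ℝ) := by
    rw [h3, h4]; simp
  rw [← this, Complex.re_sum]
  rfl

lemma jointDist_kron {dA dB : ℕ} (xA : Fin dA → Fin dA → ℂ) (xB : Fin dB → Fin dB → ℂ)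
    {ρA : Matrix (Fin dA) (Fin dA) ℂ} {ρB : Matrix (Fin dB) (Fin dB) ℂ}
    (hA : ρA.PosSemidef) (hB : ρB.PosSemidef) (ij : Fin dA × Fin dB) :
    jointDist xA xB (ρA ⊗ₖ ρB) ij = measDist xA ρA ij.1 * measDist xB ρB ij.2 := by
  obtain ⟨i, j⟩ := ij
  have key : star (tensorVec (xA i) (xB j)) ⬝ᵥ ((ρA ⊗ₖ ρB) *ᵥ tensorVec (xA i) (xB j))
      = (star (xA i) ⬝ᵥ (ρA *ᵥ xA i)) * (star (xB j) ⬝ᵥ (ρB *ᵥ xB j)) := by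
    have ha : star (xA i) ⬝ᵥ (ρA *ᵥ xA i) = ∑ a, ∑ c, star (xA i a) * ρA a c * xA i c := by
      simp only [dotProduct, Matrix.mulVec, Finset.mul_sum, Pi.star_apply, mul_assoc]
    have hb : star (xB j) ⬝ᵥ (ρB *ᵥ xB j) = ∑ b, ∑ e, star (xB j b) * ρB b e * xB j e := by
      simp only [dotProduct, Matrix.mulVec, Finset.mul_sum, Pi.star_apply, mul_assoc]
    rw [ha, hb, Finset.sum_mul_sum]
    simp only [Finset.sum_mul_sum]
    simp only [dotProduct, Matrix.mulVec, tensorVec, Pi.star_apply, Matrix.kroneckerMap_apply,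
      Fintype.sum_prod_type, Finset.sum_mul, Finset.mul_sum, star_mul']
    apply Finset.sum_congr rfl; intro a _
    apply Finset.sum_congr rfl; intro b _
    apply Finset.sum_congr rfl; intro c _
    apply Finset.sum_congr rfl; intro e _
    ring
  unfold jointDist measDist
  rw [key, Complex.mul_re, quadForm_im hA, quadForm_im hB]
  ring


open scoped Classical in
lemma sum_fiber_eq_sum_filter_mem {dA dB : ℕ} (α : Fin dA → ℝ) (β : Fin dB → ℝ)
    (p : Fin dA × Fin dB → ℝ) (S : Finset ℝ) :
    ∑ l ∈ S, ∑ ij ∈ Finset.univ.filter (fun ij : Fin dA × Fin dB => α ij.1 * β ij.2 = l), p ij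
      = ∑ ij ∈ Finset.univ.filter (fun ij : Fin dA × Fin dB => α ij.1 * β ij.2 ∈ S), p ij := by
  rw [← Finset.sum_fiberwise_of_maps_to (g := fun ij : Fin dA × Fin dB => α ij.1 * β ij.2)
    (t := S) (fun ij hij => (Finset.mem_filter.mp hij).2) p]
  refine Finset.sum_congr rfl fun l hl => Finset.sum_congr ?_ fun _ _ => rfl
  ext ij
  simp only [Finset.mem_filter, Finset.mem_univ, true_and, Finset.filter_filter]
  constructor
  · intro h
    exact ⟨by rw [h]; exact hl, h⟩
  · exact fun h => h.2

open scoped Classical in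
lemma fiber_sum_snd_le_one {dA dB : ℕ} {α : Fin dA → ℝ} {β : Fin dB → ℝ}
    (hα : Function.Injective α) (hβ0 : ∀ j, β j ≠ 0)
    {pB : Fin dB → ℝ} (hpB : ∀ j, 0 ≤ pB j) (hpB1 : ∑ j, pB j = 1) (l : ℝ) :
    ∑ ij ∈ Finset.univ.filter (fun ij : Fin dA × Fin dB => α ij.1 * β ij.2 = l), pB ij.2
      ≤ 1 := by
  set F := Finset.univ.filter (fun ij : Fin dA × Fin dB => α ij.1 * β ij.2 = l) with hF
  have hinj : ∀ x ∈ F, ∀ y ∈ F, x.2 = y.2 → x = y := by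
    intro x hx y hy hxy
    have hx' : α x.1 * β x.2 = l := (Finset.mem_filter.mp hx).2
    have hy' : α y.1 * β y.2 = l := (Finset.mem_filter.mp hy).2
    have : α x.1 * β x.2 = α y.1 * β x.2 := by rw [hx', hxy, hy']
    have h1 : α x.1 = α y.1 := mul_right_cancel₀ (hβ0 x.2) this
    exact Prod.ext (hα h1) hxy
  calc ∑ ij ∈ F, pB ij.2 = ∑ j ∈ F.image Prod.snd, pB j := (Finset.sum_image hinj).symm
    _ ≤ ∑ j, pB j := Finset.sum_le_sum_of_subset_of_nonneg (Finset.subset_univ _)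
        (fun j _ _ => hpB j)
    _ = 1 := hpB1

open scoped Classical in
/-- Core lemma: the grouped distribution of a product distribution has its top-k sums
bounded by those of the first marginal. -/
lemma topSum_groupedDist_le {dA dB : ℕ} {α : Fin dA → ℝ} {β : Fin dB → ℝ}
    (hα : Function.Injective α) (hβ0 : ∀ j, β j ≠ 0)
    {pA : Fin dA → ℝ} {pB : Fin dB → ℝ}
    (hpA : ∀ i, 0 ≤ pA i) (hpB : ∀ j, 0 ≤ pB j) (hpB1 : ∑ j, pB j = 1) (k : ℕ) :
    topSum (groupedDist α β (fun ij => pA ij.1 * pB ij.2)) k ≤ topSum pA k := by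
  apply topSum_le
  intro T hT
  set S : Finset ℝ := T.image Subtype.val with hS
  have hSk : S.card ≤ k := le_trans Finset.card_image_le hT
  set c : Fin dA → ℝ := fun i => ∑ j ∈ Finset.univ.filter (fun j => α i * β j ∈ S), pB j
    with hc
  have step1 : ∑ l ∈ T, groupedDist α β (fun ij => pA ij.1 * pB ij.2) l
      = ∑ l ∈ S, ∑ ij ∈ Finset.univ.filter
          (fun ij : Fin dA × Fin dB => α ij.1 * β ij.2 = l), pA ij.1 * pB ij.2 := by
    rw [hS, Finset.sum_image (fun x _ y _ h => Subtype.val_injective h)]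
    rfl
  have split : ∀ q : Fin dA → ℝ,
      (∑ ij ∈ Finset.univ.filter
        (fun ij : Fin dA × Fin dB => α ij.1 * β ij.2 ∈ S), q ij.1 * pB ij.2)
      = ∑ i, q i * c i := by
    intro q
    rw [Finset.sum_filter, Fintype.sum_prod_type]
    refine Finset.sum_congr rfl fun i _ => ?_
    rw [hc]
    simp only [Finset.sum_filter, Finset.mul_sum]
    exact Finset.sum_congr rfl fun j _ => by split <;> simp
  have step2 : ∑ l ∈ T, groupedDist α β (fun ij => pA ij.1 * pB ij.2) l
      = ∑ i, pA i * c i := by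
    rw [step1, sum_fiber_eq_sum_filter_mem, split]
  have hc0 : ∀ i, 0 ≤ c i := fun i => Finset.sum_nonneg fun j _ => hpB j
  have hc1 : ∀ i, c i ≤ 1 := by
    intro i
    rw [hc]
    calc ∑ j ∈ Finset.univ.filter (fun j => α i * β j ∈ S), pB j ≤ ∑ j, pB j :=
          Finset.sum_le_sum_of_subset_of_nonneg (Finset.filter_subset _ _) fun j _ _ => hpB j
      _ = 1 := hpB1
  have hck : ∑ i, c i ≤ (k : ℝ) := by
    have h1 : ∑ i, (1 : ℝ) * c i = ∑ i, c i := by simp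
    have h2 : ∑ i, (1 : ℝ) * c i
        = ∑ l ∈ S, ∑ ij ∈ Finset.univ.filter
            (fun ij : Fin dA × Fin dB => α ij.1 * β ij.2 = l), (1 : ℝ) * pB ij.2 := by
      rw [sum_fiber_eq_sum_filter_mem, split (fun _ => (1:ℝ))]
    have h3 : ∑ l ∈ S, ∑ ij ∈ Finset.univ.filter
        (fun ij : Fin dA × Fin dB => α ij.1 * β ij.2 = l), (1 : ℝ) * pB ij.2 ≤ (S.card : ℝ) := by
      calc _ ≤ ∑ _l ∈ S, (1 : ℝ) := Finset.sum_le_sum fun l _ => by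
              simpa using fiber_sum_snd_le_one hα hβ0 hpB hpB1 l
        _ = (S.card : ℝ) := by simp
    have h4 : (S.card : ℝ) ≤ (k : ℝ) := Nat.cast_le.mpr hSk
    linarith
  rw [step2]
  exact sum_mul_le_topSum pA c k hpA hc0 hc1 hck

open scoped Classical in
lemma sum_groupedDist {dA dB : ℕ} (α : Fin dA → ℝ) (β : Fin dB → ℝ)
    (p : Fin dA × Fin dB → ℝ) :
    ∑ l : valueSet α β, groupedDist α β p l = ∑ ij, p ij := by
  have h1 : ∑ l : valueSet α β, groupedDist α β p l
      = ∑ l ∈ valueSet α β, ∑ ij ∈ Finset.univ.filter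
          (fun ij : Fin dA × Fin dB => α ij.1 * β ij.2 = l), p ij := by
    rw [← Finset.sum_coe_sort (valueSet α β)
      (fun l => ∑ ij ∈ Finset.univ.filter
        (fun ij : Fin dA × Fin dB => α ij.1 * β ij.2 = l), p ij)]
    rfl
  rw [h1]
  exact Finset.sum_fiberwise_of_maps_to
    (fun ij _ => Finset.mem_image.mpr ⟨ij, Finset.mem_univ ij, rfl⟩) p

/-- for product states `ρ_A ⊗ ρ_B`, the direct sum of the grouped joint
distributions of `X_A ⊗ X_B` and `Z_A ⊗ Z_B` is majorized by `p(x^A|ρ_A) ⊕ p(z^A|ρ_A)`. -/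
theorem direct_sum_grouped_joint_dist_product_state_majorized {dA dB : ℕ}
    (α γ : Fin dA → ℝ) (β δ : Fin dB → ℝ)
    (hα : Function.Injective α) (hα0 : ∀ i, α i ≠ 0)
    (hγ : Function.Injective γ) (hγ0 : ∀ i, γ i ≠ 0)
    (hβ : Function.Injective β) (hβ0 : ∀ j, β j ≠ 0)
    (hδ : Function.Injective δ) (hδ0 : ∀ j, δ j ≠ 0)
    (xA zA : Fin dA → Fin dA → ℂ) (xB zB : Fin dB → Fin dB → ℂ)
    (hxA : OrthonormalBasisVecs xA) (hzA : OrthonormalBasisVecs zA)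
    (hxB : OrthonormalBasisVecs xB) (hzB : OrthonormalBasisVecs zB)
    (ρA : Matrix (Fin dA) (Fin dA) ℂ) (ρB : Matrix (Fin dB) (Fin dB) ℂ)
    (hρA : IsDensityMatrix ρA) (hρB : IsDensityMatrix ρB) :
    Majorizes
      (Sum.elim (groupedDist α β (jointDist xA xB (ρA ⊗ₖ ρB)))
                (groupedDist γ δ (jointDist zA zB (ρA ⊗ₖ ρB))))
      (Sum.elim (measDist xA ρA) (measDist zA ρA)) := by
  classical
  have hpAx : ∀ i, 0 ≤ measDist xA ρA i := measDist_nonneg xA hρA.1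
  have hpAz : ∀ i, 0 ≤ measDist zA ρA i := measDist_nonneg zA hρA.1
  have hpBx : ∀ j, 0 ≤ measDist xB ρB j := measDist_nonneg xB hρB.1
  have hpBz : ∀ j, 0 ≤ measDist zB ρB j := measDist_nonneg zB hρB.1
  have hBx1 : ∑ j, measDist xB ρB j = 1 := sum_measDist hxB hρB
  have hBz1 : ∑ j, measDist zB ρB j = 1 := sum_measDist hzB hρB
  have hAx1 : ∑ i, measDist xA ρA i = 1 := sum_measDist hxA hρA
  have hAz1 : ∑ i, measDist zA ρA i = 1 := sum_measDist hzA hρA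
  have hjx : jointDist xA xB (ρA ⊗ₖ ρB)
      = fun ij => measDist xA ρA ij.1 * measDist xB ρB ij.2 :=
    funext fun ij => jointDist_kron xA xB hρA.1 hρB.1 ij
  have hjz : jointDist zA zB (ρA ⊗ₖ ρB)
      = fun ij => measDist zA ρA ij.1 * measDist zB ρB ij.2 :=
    funext fun ij => jointDist_kron zA zB hρA.1 hρB.1 ij
  constructor
  · intro k
    refine topSum_elim_le_topSum_elim (fun k => ?_) (fun k => ?_) k
    · rw [hjx]
      exact topSum_groupedDist_le hα hβ0 hpAx hpBx hBx1 k
    · rw [hjz]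
      exact topSum_groupedDist_le hγ hδ0 hpAz hpBz hBz1 k
  · have e1 : ∑ ij : Fin dA × Fin dB, measDist xA ρA ij.1 * measDist xB ρB ij.2 = 1 := by
      rw [Fintype.sum_prod_type]
      simp only [← Finset.mul_sum, hBx1, mul_one, hAx1]
    have e2 : ∑ ij : Fin dA × Fin dB, measDist zA ρA ij.1 * measDist zB ρB ij.2 = 1 := by
      rw [Fintype.sum_prod_type]
      simp only [← Finset.mul_sum, hBz1, mul_one, hAz1]
    have hL : ∑ i, Sum.elim (groupedDist α β (jointDist xA xB (ρA ⊗ₖ ρB)))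
        (groupedDist γ δ (jointDist zA zB (ρA ⊗ₖ ρB))) i = 2 := by
      rw [Fintype.sum_sum_type]
      simp only [Sum.elim_inl, Sum.elim_inr]
      rw [hjx, hjz, sum_groupedDist, sum_groupedDist, e1, e2]
      norm_num
    have hR : ∑ j, Sum.elim (measDist xA ρA) (measDist zA ρA) j = 2 := by
      rw [Fintype.sum_sum_type]
      simp only [Sum.elim_inl, Sum.elim_inr]
      rw [hAx1, hAz1]
      norm_num
    rw [hL, hR]

end
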